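/- arXiv:1207.5702 — 3 statements merged into one kernel-verified Lean document; each statement's English description precedes it below -/
import Mathlib

section
/- Let G be a finite group. There exists s ∈ G such that left multiplication by s is an odd permutation of G if and only if |G| is even and the Sylow 2-subgroups of G are cyclic. -/
open Equiv Equiv.Perm

lemma mulRight_pow_apply {H : Type*} [Group H] (h : H) (n : ℕ) (x : H) :
    ((Equiv.mulRight h : Equiv.Perm H) ^ n) x = x * h ^ n := by
  induction n generalizing x with
  | zero => simp
  | succ n ih =>
    rw [pow_succ, Equiv.Perm.mul_apply, Equiv.coe_mulRight, ih, pow_succ', mul_assoc]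

-- sign of right multiplication by a generator of a finite group
lemma sign_mulRight_gen {H : Type*} [Group H] [Fintype H] [DecidableEq H] (h : H)
    (hgen : ∀ x : H, x ∈ Submonoid.powers h) :
    Equiv.Perm.sign (Equiv.mulRight h) = (-1) ^ (Fintype.card H - 1) := by
  rcases eq_or_ne h 1 with rfl | hne
  · have : Fintype.card H = 1 := by
      refine Fintype.card_eq_one_iff.mpr ⟨1, fun x => ?_⟩
      obtain ⟨n, rfl⟩ := hgen x; simp
    simp [this]
  · have hcycle : (Equiv.mulRight h : Equiv.Perm H).IsCycle := by
      refine ⟨1, by simpa using hne, fun y hy => ?_⟩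
      obtain ⟨n, rfl⟩ := hgen y
      exact ⟨(n : ℤ), by rw [zpow_natCast, mulRight_pow_apply, one_mul]⟩
    have hsupp : (Equiv.mulRight h : Equiv.Perm H).support = Finset.univ := by
      ext x; simp [Equiv.Perm.mem_support, hne]
    rw [hcycle.sign, hsupp, Finset.card_univ]
    have h1 : 1 ≤ Fintype.card H := Fintype.card_pos
    rw [show Fintype.card H = (Fintype.card H - 1) + 1 from (Nat.sub_add_cancel h1).symm,
      pow_succ]
    simp

lemma sign_mulRight_eq {G : Type*} [Group G] [Fintype G] [DecidableEq G] (t : G) :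
    Equiv.Perm.sign (Equiv.mulRight t)
      = ((-1 : ℤˣ) ^ (orderOf t - 1)) ^ (Fintype.card G / orderOf t) := by
  classical
  set H := Subgroup.zpowers t with hH
  let ht : H := ⟨t, Subgroup.mem_zpowers t⟩
  have memH : ∀ g : G, (Quotient.out (QuotientGroup.mk g : G ⧸ H))⁻¹ * g ∈ H := by
    intro g
    rw [← QuotientGroup.eq]
    exact Quotient.out_eq _
  let e : G ≃ (G ⧸ H) × H :=
  { toFun := fun g => (QuotientGroup.mk g,
      ⟨(Quotient.out (QuotientGroup.mk g : G ⧸ H))⁻¹ * g, memH g⟩)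
    invFun := fun p => Quotient.out p.1 * (p.2 : G)
    left_inv := fun g => by simp
    right_inv := fun p => by
      have h1 : (QuotientGroup.mk (Quotient.out p.1 * (p.2 : G)) : G ⧸ H) = p.1 := by
        rw [QuotientGroup.mk_mul_of_mem _ p.2.2, QuotientGroup.out_eq']
      ext
      · exact h1
      · simp [h1] }
  have key : ∀ x : G, e (x * t)
      = Equiv.prodCongrRight (fun _ : G ⧸ H => Equiv.mulRight ht) (e x) := by
    intro x
    have hq : (QuotientGroup.mk (x * t) : G ⧸ H) = QuotientGroup.mk x :=
      QuotientGroup.mk_mul_of_mem x (Subgroup.mem_zpowers t)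
    have : e (x * t) = (QuotientGroup.mk (x * t),
      ⟨(Quotient.out (QuotientGroup.mk (x * t) : G ⧸ H))⁻¹ * (x * t), memH _⟩) := rfl
    rw [this]
    refine Prod.ext hq (Subtype.ext ?_)
    simp [e, Equiv.prodCongrRight, hq, mul_assoc]
    rfl
  have hs := Equiv.Perm.sign_eq_sign_of_equiv (Equiv.mulRight t)
    (Equiv.prodCongrRight (fun _ : G ⧸ H => Equiv.mulRight ht)) e key
  rw [hs, Equiv.Perm.sign_prodCongrRight]
  have hgen : ∀ x : H, x ∈ Submonoid.powers ht := by
    intro x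
    rw [mem_powers_iff_mem_zpowers]
    obtain ⟨i, hi⟩ := x.2
    exact ⟨i, Subtype.ext (by simpa using hi)⟩
  have hsign : Equiv.Perm.sign (Equiv.mulRight ht) = (-1 : ℤˣ) ^ (Fintype.card H - 1) :=
    sign_mulRight_gen ht hgen
  have hcardH : Fintype.card H = orderOf t := Fintype.card_zpowers
  have hquot : Fintype.card (G ⧸ H) = Fintype.card G / orderOf t := by
    have h2 := Subgroup.card_eq_card_quotient_mul_card_subgroup H
    simp only [Nat.card_eq_fintype_card] at h2
    rw [hcardH] at h2
    rw [h2, Nat.mul_div_cancel _ (orderOf_pos t)]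
  rw [Finset.prod_const, Finset.card_univ, hsign, hcardH, hquot]

lemma sign_mulLeft_eq {G : Type*} [Group G] [Fintype G] [DecidableEq G] (s : G) :
    Equiv.Perm.sign (Equiv.mulLeft s)
      = ((-1 : ℤˣ) ^ (orderOf s - 1)) ^ (Fintype.card G / orderOf s) := by
  have h := Equiv.Perm.sign_eq_sign_of_equiv (Equiv.mulLeft s) (Equiv.mulRight s⁻¹)
    (Equiv.inv G) (fun x => by simp [mul_comm])
  rw [h, sign_mulRight_eq, orderOf_inv]

lemma isCyclic_zpowers' {G : Type*} [Group G] (u : G) : IsCyclic (Subgroup.zpowers u) := by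
  refine ⟨⟨⟨u, Subgroup.mem_zpowers u⟩, fun x => ?_⟩⟩
  obtain ⟨i, hi⟩ := x.2
  exact ⟨i, Subtype.ext (by simpa using hi)⟩


/-- There exists `s ∈ G` acting as an odd permutation by left multiplication
iff `|G|` is even and the Sylow 2-subgroups of `G` are cyclic. -/
theorem stmt_2 (G : Type*) [Group G] [Fintype G] [DecidableEq G] :
    (∃ s : G, Equiv.Perm.sign (Equiv.mulLeft s) = -1) ↔
      Even (Fintype.card G) ∧ ∀ P : Sylow 2 G, IsCyclic P := by
  have hGpos : Fintype.card G ≠ 0 := Fintype.card_ne_zero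
  have hNat : Nat.card G = Fintype.card G := Nat.card_eq_fintype_card
  constructor
  · rintro ⟨s, hs⟩
    rw [sign_mulLeft_eq] at hs
    set d := orderOf s with hd
    set m := Fintype.card G / d with hm
    have hodd : Odd ((d - 1) * m) := by
      by_contra h
      rw [Nat.not_odd_iff_even] at h
      rw [← pow_mul] at hs
      rw [h.neg_one_pow] at hs
      exact absurd hs (by decide)
    obtain ⟨hd1, hmodd⟩ := (Nat.odd_mul).mp hodd
    have hdpos : 0 < d := orderOf_pos s
    have hdeven : Even d := by
      rcases Nat.even_or_odd d with h | h
      · exact h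
      · exact absurd (Nat.Odd.sub_odd h odd_one) (by simpa using hd1)
    have hddvd : d ∣ Fintype.card G := orderOf_dvd_card
    have hcard : Fintype.card G = d * m := (Nat.mul_div_cancel' hddvd).symm
    refine ⟨hcard ▸ hdeven.mul_right m, ?_⟩
    -- build a cyclic Sylow 2-subgroup from s
    set k := (Fintype.card G).factorization 2 with hk
    have h2k_dvd_d : 2 ^ k ∣ d := by
      have hdfac : d.factorization 2 = k := by
        have hm0 : m ≠ 0 := by
          intro h0
          rw [h0] at hmodd
          simp [Nat.odd_iff] at hmodd
        rw [hk, hcard, Nat.factorization_mul (by omega) hm0]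
        have hmz : m.factorization 2 = 0 := by
          rw [Nat.factorization_eq_zero_iff]
          right; left
          rw [Nat.odd_iff] at hmodd
          omega
        simp [hmz]
      rw [← hdfac]
      exact Nat.ordProj_dvd d 2
    set u := s ^ (d / 2 ^ k) with hu
    have horder : orderOf u = 2 ^ k := by
      have h2kpos : 0 < 2 ^ k := Nat.pow_pos (by norm_num)
      have hne : d / 2 ^ k ≠ 0 := by
        intro h
        have := Nat.div_mul_cancel h2k_dvd_d
        rw [h] at this
        omega
      rw [hu, orderOf_pow' s hne, ← hd, Nat.gcd_eq_right (Nat.div_dvd_of_dvd h2k_dvd_d),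
        Nat.div_div_self h2k_dvd_d (by omega)]
    have hcardu : Nat.card (Subgroup.zpowers u) = 2 ^ (Nat.card G).factorization 2 := by
      rw [Nat.card_zpowers, horder, hNat]
    let Q0 : Sylow 2 G := Sylow.ofCard (Subgroup.zpowers u) hcardu
    intro P
    have hQ0cyc : IsCyclic Q0 := isCyclic_zpowers' u
    have e : (P : Subgroup G) ≃* (Q0 : Subgroup G) := Sylow.equiv P Q0
    exact isCyclic_of_surjective e.symm e.symm.surjective
  · rintro ⟨heven, hcyc⟩
    obtain ⟨P⟩ := Sylow.nonempty (p := 2) (G := G)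
    have hcyc' := hcyc P
    obtain ⟨g, hg⟩ := hcyc'.exists_generator
    set k := (Fintype.card G).factorization 2 with hk
    have hcardP : Nat.card P = 2 ^ k := by
      rw [Sylow.card_eq_multiplicity, hNat]
    have hkpos : 1 ≤ k := by
      have h2 : (2 : ℕ) ∣ Fintype.card G := heven.two_dvd
      have := (Nat.Prime.factorization_pos_of_dvd Nat.prime_two hGpos h2)
      omega
    have horderg : orderOf (g : G) = 2 ^ k := by
      rw [Subgroup.orderOf_coe, orderOf_eq_card_of_forall_mem_zpowers hg, hcardP]
    refine ⟨(g : G), ?_⟩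
    rw [sign_mulLeft_eq, horderg]
    have hmodd : ¬ 2 ∣ Fintype.card G / 2 ^ k := Nat.not_dvd_ordCompl Nat.prime_two hGpos
    have hodd : Odd ((2 ^ k - 1) * (Fintype.card G / 2 ^ k)) := by
      have h2 : (2 : ℕ) ∣ 2 ^ k := dvd_pow_self 2 (by omega)
      have h2kpos : 0 < 2 ^ k := Nat.pow_pos (by norm_num)
      exact Odd.mul (Nat.odd_iff.mpr (by omega)) (Nat.odd_iff.mpr (by omega))
    rw [← pow_mul, hodd.neg_one_pow]
end

section
/- Let G be a finite group of order n and exponent e, and s ∈ G of order m. Then (n/m)·(m-1)/2 is an integer for every s ∈ G if and only if it is not the case that n is even with cyclic Sylow 2-subgroups. -/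
private lemma half_int_iff (N : ℕ) :
    (∃ k : ℤ, (N : ℚ) / 2 = (k : ℚ)) ↔ 2 ∣ N := by
  constructor
  · rintro ⟨k, hk⟩
    have h : (N : ℚ) = 2 * k := by field_simp at hk; linarith
    have h2 : (N : ℤ) = 2 * k := by exact_mod_cast h
    omega
  · rintro ⟨c, rfl⟩
    exact ⟨c, by push_cast; ring⟩

private lemma per_elem {G : Type*} [Group G] [Fintype G] {n : ℕ}
    (hn : Fintype.card G = n) (s : G) :
    (∃ k : ℤ, ((n : ℚ) / (orderOf s : ℚ)) * (((orderOf s : ℚ) - 1) / 2) = (k : ℚ)) ↔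
      2 ∣ (n / orderOf s) * (orderOf s - 1) := by
  have hm : orderOf s ∣ n := hn ▸ orderOf_dvd_card
  have hm1 : 1 ≤ orderOf s := orderOf_pos s
  have hq : ((n / orderOf s * (orderOf s - 1) : ℕ) : ℚ) / 2
      = ((n : ℚ) / (orderOf s : ℚ)) * (((orderOf s : ℚ) - 1) / 2) := by
    rw [Nat.cast_mul, Nat.cast_div hm (by exact_mod_cast hm1.trans_lt' zero_lt_one |>.ne'),
      Nat.cast_sub hm1]
    push_cast
    ring
  rw [← half_int_iff]
  simp only [hq]

/-- `(n/m)·(m-1)/2` is an integer for every element order `m` of `G` iff it is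
not the case that `n = |G|` is even with cyclic Sylow 2-subgroups. -/
theorem stmt_6 (G : Type*) [Group G] [Fintype G] (n e : ℕ)
    (hn : Fintype.card G = n) (he : Monoid.exponent G = e) :
    (∀ s : G, ∃ k : ℤ,
        ((n : ℚ) / (orderOf s : ℚ)) * (((orderOf s : ℚ) - 1) / 2) = (k : ℚ)) ↔
      ¬ (Even n ∧ ∀ P : Sylow 2 G, IsCyclic P) := by
  haveI : Fact (Nat.Prime 2) := ⟨Nat.prime_two⟩
  have hn' : Nat.card G = n := by rw [Nat.card_eq_fintype_card, hn]
  have hn0 : n ≠ 0 := by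
    rw [← hn]; exact Fintype.card_ne_zero
  simp only [per_elem hn]
  constructor
  · rintro h ⟨hEven, hcyc⟩
    set v := n.factorization 2 with hv
    have hv1 : 1 ≤ v := by
      rw [hv]
      exact (Nat.Prime.factorization_pos_of_dvd Nat.prime_two hn0
        (even_iff_two_dvd.mp hEven))
    obtain ⟨P⟩ : Nonempty (Sylow 2 G) := inferInstance
    haveI := hcyc P
    obtain ⟨g, hg⟩ := IsCyclic.exists_ofOrder_eq_natCard (α := P)
    have hcard : Nat.card P = 2 ^ v := by rw [P.card_eq_multiplicity, hn']
    have hos : orderOf (g : G) = 2 ^ v := by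
      rw [Subgroup.orderOf_coe, hg, hcard]
    have hs := h (g : G)
    rw [hos] at hs
    have hodd1 : ¬ 2 ∣ n / 2 ^ v := Nat.not_dvd_ordCompl Nat.prime_two hn0
    have hodd2 : ¬ 2 ∣ 2 ^ v - 1 := by
      obtain ⟨w, hw⟩ : ∃ w, 2 ^ v = 2 * w :=
        ⟨2 ^ (v - 1), by rw [← pow_succ']; congr 1; omega⟩
      have h1 : 1 ≤ 2 ^ v := Nat.one_le_two_pow
      rw [hw]
      omega
    rcases (Nat.prime_two.dvd_mul.mp hs) with hd | hd
    · exact hodd1 hd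
    · exact hodd2 hd
  · intro hnc s
    by_contra hc
    apply hnc
    set m := orderOf s with hmdef
    have hm : m ∣ n := hn ▸ orderOf_dvd_card
    have hm1 : 1 ≤ m := orderOf_pos s
    have hoddq : ¬ 2 ∣ n / m := fun hd => hc (hd.mul_right _)
    have hoddm1 : ¬ 2 ∣ m - 1 := fun hd => hc (hd.mul_left _)
    have hmeven : 2 ∣ m := by omega
    constructor
    · exact even_iff_two_dvd.mpr (hmeven.trans hm)
    · -- build a cyclic Sylow 2-subgroup from a power of s
      set a := m.factorization 2 with ha
      set s' := s ^ (m / 2 ^ a) with hs'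
      have hpd : 2 ^ a ∣ m := Nat.ordProj_dvd m 2
      have hcd : m / 2 ^ a ∣ m := Nat.div_dvd_of_dvd hpd
      have hm0 : m ≠ 0 := by omega
      have hord : orderOf s' = 2 ^ a := by
        rw [hs', orderOf_pow, ← hmdef, Nat.gcd_eq_right hcd,
          Nat.div_div_self hpd hm0]
      have hfact : a = n.factorization 2 := by
        have hq0 : n / m ≠ 0 := by
          intro h0; rw [h0] at hoddq; exact hoddq (dvd_zero 2)
        have hnm : n = m * (n / m) := (Nat.mul_div_cancel' hm).symm
        have : n.factorization 2 = m.factorization 2 + (n / m).factorization 2 := by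
          conv_lhs => rw [hnm]
          rw [Nat.factorization_mul hm0 hq0]
          rfl
        rw [this, Nat.factorization_eq_zero_of_not_dvd hoddq, add_zero, ha]
      have hcardz : Nat.card (Subgroup.zpowers s') = 2 ^ (Nat.card G).factorization 2 := by
        rw [Nat.card_zpowers, hord, hn', ← hfact]
      let P0 : Sylow 2 G := Sylow.ofCard (Subgroup.zpowers s') hcardz
      have hP0 : IsCyclic P0 := by
        refine isCyclic_iff_exists_orderOf_eq_natCard.mpr
          ⟨⟨s', Subgroup.mem_zpowers s'⟩, ?_⟩
        refine (Subgroup.orderOf_mk (H := Subgroup.zpowers s') s' (Subgroup.mem_zpowers s')).trans ?_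
        show orderOf s' = Nat.card (Subgroup.zpowers s')
        rw [Nat.card_zpowers]
      intro P
      let eqv := Sylow.equiv P P0
      exact isCyclic_of_surjective eqv.symm.toMonoidHom eqv.symm.surjective
end

section
/- For e ≥ 2, define c(e) = gcd over primes p dividing e of (p-1). Then gcd over divisors m of e with m > 1 of the values (e/m)·(m-1) equals c(e). -/
/-- For `e ≥ 2`, `gcd_{m ∣ e, m > 1} (e/m)·(m-1) = c(e) := gcd_{p ∣ e prime} (p-1)`. -/
theorem stmt_7 (e : ℕ) (he : 2 ≤ e) :
    (e.divisors.filter (fun m => 1 < m)).gcd (fun m => (e / m) * (m - 1)) =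
      e.primeFactors.gcd (fun p => p - 1) := by
  have he0 : e ≠ 0 := by omega
  set L := (e.divisors.filter (fun m => 1 < m)).gcd (fun m => (e / m) * (m - 1)) with hL
  set c := e.primeFactors.gcd (fun p => p - 1) with hc
  have hmem : ∀ m, m ∣ e → 1 < m → m ∈ e.divisors.filter (fun m => 1 < m) := by
    intro m hm h1
    simp [Nat.mem_divisors, hm, h1, he0]
  have hLe : L ∣ e - 1 := by
    have := Finset.gcd_dvd (f := fun m => (e / m) * (m - 1)) (hmem e dvd_rfl (by omega))
    simpa [Nat.div_self (by omega : 0 < e)] using this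
  apply Nat.dvd_antisymm
  · -- L ∣ c
    apply Finset.dvd_gcd
    intro p hp
    rw [Nat.mem_primeFactors] at hp
    obtain ⟨hpp, hpe, -⟩ := hp
    obtain ⟨f, hf⟩ := hpe
    have hf0 : f ≠ 0 := by rintro rfl; exact he0 (by simp [hf])
    by_cases h1 : f = 1
    · subst h1
      simp only [mul_one] at hf
      subst hf
      exact hLe
    · have hf1 : 1 < f := by omega
      have hfd : f ∣ e := ⟨p, by rw [hf]; ring⟩
      have h2 := Finset.gcd_dvd (f := fun m => (e / m) * (m - 1)) (hmem f hfd hf1)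
      have hef : e / f = p := by rw [hf, mul_comm, Nat.mul_div_cancel_left _ (Nat.pos_of_ne_zero hf0)]
      simp only [hef] at h2
      -- h2 : L ∣ p * (f - 1), hLe : L ∣ e - 1
      have hsub : p - 1 = (e - 1) - p * (f - 1) := by
        have : p * (f - 1) = e - p := by rw [hf, Nat.mul_sub, mul_one]
        have hpe' : p ≤ e := Nat.le_of_dvd (by omega) ⟨f, hf⟩
        have hp2 : 2 ≤ p := hpp.two_le
        omega
      rw [hsub]
      exact Nat.dvd_sub hLe h2
  · -- c ∣ L
    apply Finset.dvd_gcd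
    intro m hm
    simp only [Finset.mem_filter, Nat.mem_divisors] at hm
    obtain ⟨⟨hme, -⟩, hm1⟩ := hm
    have key : ∀ n : ℕ, n ∣ e → n ≡ 1 [MOD c] := by
      intro n
      induction n using Nat.recOnMul with
      | zero => intro h; exact absurd (Nat.eq_zero_of_zero_dvd h) he0
      | one => intro _; rfl
      | prime p hpp =>
        intro hpe
        have hcp : c ∣ p - 1 := Finset.gcd_dvd (Nat.mem_primeFactors.mpr ⟨hpp, hpe, he0⟩)
        have : 1 ≤ p := hpp.one_lt.le
        calc p = (p - 1) + 1 := by omega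
          _ ≡ 0 + 1 [MOD c] := Nat.ModEq.add_right 1 ((Nat.modEq_zero_iff_dvd).mpr hcp)
          _ = 1 := by ring
      | mul a b ha hb =>
        intro hab
        have := (ha (dvd_trans (dvd_mul_right a b) hab)).mul
          (hb (dvd_trans (dvd_mul_left b a) hab))
        simpa using this
    have hcm : c ∣ m - 1 := (Nat.modEq_iff_dvd' (by omega)).mp (key m hme).symm
    exact Dvd.dvd.mul_left hcm _
end
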